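/- Let p be a prime and L a normalized lattice such that either Q(L_p) ≠ 2ℤ_p, or p = 2 and s(L) = 2ℤ. If W is a ℚ_p-subspace of ℚ_p L = L ⊗ ℚ_p, then Λ_{2p}(W ∩ L_p) = W ∩ Λ_{2p}(L_p). -/

import Mathlib

open Matrix

namespace Paper

/-- The quadratic map attached to a Gram matrix `G` over a commutative ring. -/
def Qf {R : Type*} [CommRing R] {m : ℕ} (G : Matrix (Fin m) (Fin m) R) (x : Fin m → R) : R :=
  x ⬝ᵥ (G *ᵥ x)

/-- The bilinear form attached to a Gram matrix `G`. -/
def Bf {R : Type*} [CommRing R] {m : ℕ} (G : Matrix (Fin m) (Fin m) R) (x y : Fin m → R) : R :=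
  x ⬝ᵥ (G *ᵥ y)

/-- `G` is the Gram matrix of a positive definite integral `ℤ`-lattice. -/
def IsLat {m : ℕ} (G : Matrix (Fin m) (Fin m) ℤ) : Prop := G.IsSymm ∧ G.PosDef

/-- The lattice with Gram matrix `A` is represented by the lattice with Gram matrix `G`
(the representation is `x ↦ x ᵥ* T`). -/
def Rep {R : Type*} [CommRing R] {k m : ℕ} (A : Matrix (Fin k) (Fin k) R)
    (G : Matrix (Fin m) (Fin m) R) : Prop :=
  ∃ T : Matrix (Fin k) (Fin m) R, A = T * G * Tᵀ

/-- Primitive representation: the image is a direct summand, i.e. the map `x ↦ x ᵥ* T`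
admits a linear retraction. -/
def PrimRep {R : Type*} [CommRing R] {k m : ℕ} (A : Matrix (Fin k) (Fin k) R)
    (G : Matrix (Fin m) (Fin m) R) : Prop :=
  ∃ T : Matrix (Fin k) (Fin m) R, A = T * G * Tᵀ ∧
    ∃ U : Matrix (Fin m) (Fin k) R, T * U = 1

/-- The `p`-adic localization `L_p` of an integral matrix/lattice. -/
noncomputable def padic (p : ℕ) [Fact p.Prime] {k m : ℕ} (A : Matrix (Fin k) (Fin m) ℤ) :
    Matrix (Fin k) (Fin m) ℤ_[p] := A.map (Int.cast : ℤ → ℤ_[p])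

/-- Isometry of two Gram matrices over a commutative ring. -/
def Isom {R : Type*} [CommRing R] {m : ℕ} (A B : Matrix (Fin m) (Fin m) R) : Prop :=
  ∃ T : Matrix (Fin m) (Fin m) R, IsUnit T.det ∧ A = T * B * Tᵀ

/-- `G'` belongs to the genus of `G`. -/
def InGenus {m : ℕ} (G G' : Matrix (Fin m) (Fin m) ℤ) : Prop :=
  IsLat G' ∧ ∀ (p : ℕ) [Fact p.Prime], Isom (padic p G') (padic p G)

/-- `A` is represented by the genus of `G`. -/
def GenusRep {k m : ℕ} (A : Matrix (Fin k) (Fin k) ℤ) (G : Matrix (Fin m) (Fin m) ℤ) : Prop :=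
  ∃ G' : Matrix (Fin m) (Fin m) ℤ, InGenus G G' ∧ Rep A G'

/-- `A` is primitively represented by the genus of `G`. -/
def GenusPrimRep {k m : ℕ} (A : Matrix (Fin k) (Fin k) ℤ) (G : Matrix (Fin m) (Fin m) ℤ) : Prop :=
  ∃ G' : Matrix (Fin m) (Fin m) ℤ, InGenus G G' ∧ PrimRep A G'

/-- `G` is an `n`-regular lattice. -/
def Regular (n : ℕ) {m : ℕ} (G : Matrix (Fin m) (Fin m) ℤ) : Prop :=
  ∀ A : Matrix (Fin n) (Fin n) ℤ, IsLat A → GenusRep A G → Rep A G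

/-- `G` is a strictly `n`-regular lattice. -/
def StrictlyRegular (n : ℕ) {m : ℕ} (G : Matrix (Fin m) (Fin m) ℤ) : Prop :=
  ∀ A : Matrix (Fin n) (Fin n) ℤ, IsLat A → GenusPrimRep A G → PrimRep A G

/-- The `i`-th successive minimum of the lattice with Gram matrix `G`. -/
noncomputable def mu {m : ℕ} (G : Matrix (Fin m) (Fin m) ℤ) (i : ℕ) : ℕ :=
  sInf {t : ℕ | ∃ v : Fin i → (Fin m → ℤ), LinearIndependent ℤ v ∧ ∀ j, Qf G (v j) ≤ (t : ℤ)}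

/-- Two lattices are similar if one is isometric to a positive rational scaling of the other. -/
def Similar {m : ℕ} (G G' : Matrix (Fin m) (Fin m) ℤ) : Prop :=
  ∃ (r : ℚ) (T : Matrix (Fin m) (Fin m) ℤ), 0 < r ∧ IsUnit T.det ∧
    G'.map (Int.cast : ℤ → ℚ) = r • ((T * G * Tᵀ).map (Int.cast : ℤ → ℚ))

/-- The norm ideal `n(L)` of a lattice. -/
def NormIdeal {m : ℕ} (G : Matrix (Fin m) (Fin m) ℤ) : Ideal ℤ :=
  Ideal.span (Set.range (Qf G))

/-- The scale ideal `s(L)` of a lattice. -/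
def ScaleIdeal {m : ℕ} (G : Matrix (Fin m) (Fin m) ℤ) : Ideal ℤ :=
  Ideal.span {a : ℤ | ∃ i j, G i j = a}

/-- A lattice is normalized if its norm ideal is `2ℤ`. -/
def Normalized {m : ℕ} (G : Matrix (Fin m) (Fin m) ℤ) : Prop :=
  NormIdeal G = Ideal.span {(2 : ℤ)}

/-- The Watson sublattice `Λ_k(L)`, as a subset of the underlying module. -/
def Lambda {R : Type*} [CommRing R] (k : ℕ) {m : ℕ} (G : Matrix (Fin m) (Fin m) R) :
    Set (Fin m → R) :=
  {x | ∀ z, (k : R) ∣ Qf G (x + z) - Qf G z}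

/-- The Watson sublattice `Λ_k` of a sublattice `S` (with the quadratic map inherited
from the ambient Gram matrix `G`). -/
def LambdaIn {R : Type*} [CommRing R] (k : ℕ) {m : ℕ} (G : Matrix (Fin m) (Fin m) R)
    (S : Set (Fin m → R)) : Set (Fin m → R) :=
  {x ∈ S | ∀ z ∈ S, (k : R) ∣ Qf G (x + z) - Qf G z}

lemma Qf_add {R : Type*} [CommRing R] {m : ℕ} (G : Matrix (Fin m) (Fin m) R)
    (x z : Fin m → R) :
    Qf G (x + z) = Qf G x + Qf G z + (x ⬝ᵥ (G *ᵥ z) + z ⬝ᵥ (G *ᵥ x)) := by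
  simp [Qf, Matrix.mulVec_add, dotProduct_add, add_dotProduct]
  ring

lemma Qf_smul {R : Type*} [CommRing R] {m : ℕ} (G : Matrix (Fin m) (Fin m) R)
    (c : R) (x : Fin m → R) : Qf G (c • x) = c ^ 2 * Qf G x := by
  simp [Qf, Matrix.mulVec_smul, smul_dotProduct, dotProduct_smul, smul_eq_mul]
  ring

/-- The Watson sublattice `Λ_k(L)` as a `ℤ`-submodule. -/
def LambdaMod (k : ℕ) {m : ℕ} (G : Matrix (Fin m) (Fin m) ℤ) : Submodule ℤ (Fin m → ℤ) where
  carrier := Lambda k G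
  zero_mem' := by intro z; simp
  add_mem' := by
    intro x y hx hy z
    have h := dvd_add (hx (y + z)) (hy z)
    have e : Qf G (x + (y + z)) - Qf G (y + z) + (Qf G (y + z) - Qf G z)
        = Qf G (x + y + z) - Qf G z := by
      rw [add_assoc]; ring
    exact e ▸ h
  smul_mem' := by
    intro c x hx z
    have h0 : (k : ℤ) ∣ Qf G x := by simpa [Qf] using hx 0
    have hz : (k : ℤ) ∣ Qf G x + (x ⬝ᵥ (G *ᵥ z) + z ⬝ᵥ (G *ᵥ x)) := by
      have := hx z
      rwa [Qf_add, show Qf G x + Qf G z + (x ⬝ᵥ (G *ᵥ z) + z ⬝ᵥ (G *ᵥ x)) - Qf G z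
          = Qf G x + (x ⬝ᵥ (G *ᵥ z) + z ⬝ᵥ (G *ᵥ x)) by ring] at this
    have hcross : (k : ℤ) ∣ (x ⬝ᵥ (G *ᵥ z) + z ⬝ᵥ (G *ᵥ x)) := by
      simpa using dvd_sub hz h0
    have key : Qf G (c • x + z) - Qf G z
        = c ^ 2 * Qf G x + c * (x ⬝ᵥ (G *ᵥ z) + z ⬝ᵥ (G *ᵥ x)) := by
      have e1 : (c • x) ⬝ᵥ (G *ᵥ z) = c * (x ⬝ᵥ (G *ᵥ z)) := by
        rw [smul_dotProduct, smul_eq_mul]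
      have e2 : z ⬝ᵥ (G *ᵥ (c • x)) = c * (z ⬝ᵥ (G *ᵥ x)) := by
        rw [Matrix.mulVec_smul, dotProduct_smul, smul_eq_mul]
      rw [Qf_add, Qf_smul, e1, e2]
      ring
    rw [key]
    exact dvd_add (Dvd.dvd.mul_left h0 _) (Dvd.dvd.mul_left hcross c)

/-- The set of values of `Q` on `L_p` is all of `2ℤ_p`. -/
def QValuesFull (p : ℕ) [Fact p.Prime] {m : ℕ} (G : Matrix (Fin m) (Fin m) ℤ) : Prop :=
  Set.range (Qf (padic p G)) = {a : ℤ_[p] | (2 : ℤ_[p]) ∣ a}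

/-- One Watson step followed by scaling by `r`:
`G'` is a Gram matrix of the scaled lattice `Λ_{2p}^{(r)}(G)`. -/
def LambdaScaledStep (p : ℕ) (r : ℚ) {m : ℕ} (G G' : Matrix (Fin m) (Fin m) ℤ) : Prop :=
  ∃ T : Matrix (Fin m) (Fin m) ℤ, LinearIndependent ℤ (fun i => T i) ∧
    Submodule.span ℤ (Set.range T) = LambdaMod (2 * p) G ∧
    G'.map (Int.cast : ℤ → ℚ) = r • ((T * G * Tᵀ).map (Int.cast : ℤ → ℚ))

/-- An admissible chain of scaled Watson transformations at `p`, starting from `G`: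
every intermediate lattice is normalized. -/
def AdmissibleChain (p : ℕ) {m : ℕ} (G : Matrix (Fin m) (Fin m) ℤ) (l : ℕ)
    (rs : Fin l → ℚ) (Ls : Fin (l + 1) → Matrix (Fin m) (Fin m) ℤ) : Prop :=
  Ls 0 = G ∧ (∀ i, 0 < rs i) ∧
  ∀ i : Fin l, LambdaScaledStep p (rs i) (Ls i.castSucc) (Ls i.succ) ∧ Normalized (Ls i.succ)

/-- `L'_p` has an orthogonal direct summand isometric to the hyperbolic plane over `ℤ_p`. -/
def HypSplit (p : ℕ) [Fact p.Prime] {m : ℕ} (L' : Matrix (Fin m) (Fin m) ℤ) : Prop :=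
  ∃ (T : Matrix (Fin m) (Fin m) ℤ_[p]) (i0 i1 : Fin m), i0 ≠ i1 ∧ IsUnit T.det ∧
    (T * padic p L' * Tᵀ) i0 i0 = 0 ∧ (T * padic p L' * Tᵀ) i0 i1 = 1 ∧
    (T * padic p L' * Tᵀ) i1 i0 = 1 ∧ (T * padic p L' * Tᵀ) i1 i1 = 0 ∧
    ∀ j, j ≠ i0 → j ≠ i1 →
      (T * padic p L' * Tᵀ) i0 j = 0 ∧ (T * padic p L' * Tᵀ) i1 j = 0 ∧
      (T * padic p L' * Tᵀ) j i0 = 0 ∧ (T * padic p L' * Tᵀ) j i1 = 0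

/-- The conclusions of Corollary 3.5 for the final lattice `L'` of an admissible chain:
`L'` is a normalized strictly `n`-regular lattice, `Q(L'_p) = 2ℤ_p`, and for every prime
`q ≠ p` the lattice `L'_q` is isometric to a scaling of `G_q`. -/
def GoodTarget (n p : ℕ) [Fact p.Prime] {m : ℕ} (G L' : Matrix (Fin m) (Fin m) ℤ) : Prop :=
  IsLat L' ∧ Normalized L' ∧ StrictlyRegular n L' ∧ QValuesFull p L' ∧
  ∀ (q : ℕ) [Fact q.Prime], q ≠ p →
    ∃ (c : ℚ) (T : Matrix (Fin m) (Fin m) ℤ_[q]), 0 < c ∧ IsUnit T.det ∧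
      L'.map (Int.cast : ℤ → ℚ_[q])
        = (c : ℚ_[q]) • ((T * padic q G * Tᵀ).map ((↑) : ℤ_[q] → ℚ_[q]))


section Aux

lemma Qf_map {R S : Type*} [CommRing R] [CommRing S] (f : R →+* S) {m : ℕ}
    (G : Matrix (Fin m) (Fin m) R) (v : Fin m → R) :
    f (Qf G v) = Qf (G.map f) (fun i => f (v i)) := by
  simp [Qf, dotProduct, Matrix.mulVec, map_sum, _root_.map_mul]

lemma zmod2_Qf_zero {m : ℕ} (H : Matrix (Fin m) (Fin m) (ZMod 2)) (hsym : H.IsSymm)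
    (hdiag : ∀ i, H i i = 0) (w : Fin m → ZMod 2) : Qf H w = 0 := by
  have : Qf H w = ∑ x : Fin m × Fin m, w x.1 * (H x.1 x.2 * w x.2) := by
    rw [Fintype.sum_prod_type]
    simp [Qf, dotProduct, Matrix.mulVec, Finset.mul_sum]
  rw [this]
  apply Finset.sum_ninvolution Prod.swap
  · intro a
    have hs : H a.2 a.1 = H a.1 a.2 := hsym.apply a.1 a.2
    have h : w a.2 * (H a.2 a.1 * w a.1) = w a.1 * (H a.1 a.2 * w a.2) := by rw [hs]; ring
    simp only [Prod.swap, h]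
    have h2 : (2 : ZMod 2) = 0 := rfl
    rw [← two_mul, h2, zero_mul]
  · intro a hfa heq
    apply hfa
    have h : a.2 = a.1 := by
      have := congrArg Prod.fst heq; simpa using this
    rw [h, hdiag]; ring
  · intro a; exact Finset.mem_univ _
  · intro a; simp

lemma dvd2_iff (x : ℤ_[2]) : (2 : ℤ_[2]) ∣ x ↔ PadicInt.toZMod x = 0 := by
  rw [← Ideal.mem_span_singleton (α := ℤ_[2])]
  rw [show Ideal.span {(2:ℤ_[2])} = IsLocalRing.maximalIdeal ℤ_[2] from by
        rw [PadicInt.maximalIdeal_eq_span_p]; norm_num]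
  rw [← PadicInt.ker_toZMod, RingHom.mem_ker]

lemma unit_of_not_dvd {p : ℕ} [Fact p.Prime] (u : ℤ_[p]) (h : ¬ (p : ℤ_[p]) ∣ u) :
    IsUnit u := by
  rw [PadicInt.isUnit_iff]
  refine le_antisymm u.norm_le_one (not_lt.1 ?_)
  rw [PadicInt.norm_lt_one_iff_dvd]; exact h

lemma norm_one_of_not_dvd {p : ℕ} [Fact p.Prime] (u : ℤ_[p]) (h : ¬ (p : ℤ_[p]) ∣ u) :
    ‖u‖ = 1 := PadicInt.isUnit_iff.1 (unit_of_not_dvd u h)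

lemma zmod2_ne_zero (y : ZMod 2) (h : y ≠ 0) : y = 1 := by
  fin_cases y
  · exact (h rfl).elim
  · rfl

lemma two_unit {p : ℕ} [Fact p.Prime] (hp : p ≠ 2) : IsUnit (2 : ℤ_[p]) := by
  apply unit_of_not_dvd
  intro hdvd
  have h2 : ((2:ℤ_[p])) = ((2:ℤ) : ℤ_[p]) := by push_cast; ring
  rw [h2, show ((p : ℤ_[p])) = ((p:ℤ) : ℤ_[p]) from by push_cast; ring] at hdvd
  have hlt : ‖((2:ℤ) : ℤ_[p])‖ < 1 := by
    rw [← h2]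
    rw [PadicInt.norm_lt_one_iff_dvd]
    rw [h2]; exact hdvd
  rw [PadicInt.norm_int_lt_one_iff_dvd] at hlt
  have hd := Int.ofNat_dvd.mp (by exact_mod_cast hlt)
  exact hp ((Nat.prime_dvd_prime_iff_eq (Fact.out) Nat.prime_two).mp hd)

lemma Qf_even (p : ℕ) [Fact p.Prime] {m : ℕ} (G : Matrix (Fin m) (Fin m) ℤ)
    (hsym : G.IsSymm) (hdiag : ∀ i, (2:ℤ) ∣ G i i) (v : Fin m → ℤ_[p]) :
    (2 : ℤ_[p]) ∣ Qf (padic p G) v := by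
  by_cases hp : p = 2
  · subst hp
    rw [dvd2_iff, Qf_map PadicInt.toZMod]
    apply zmod2_Qf_zero
    · exact (hsym.map _).map _
    · intro i
      show PadicInt.toZMod (((G i i : ℤ) : ℤ_[2])) = 0
      rw [map_intCast, ZMod.intCast_zmod_eq_zero_iff_dvd]
      exact_mod_cast hdiag i
  · exact (two_unit hp).dvd

lemma dot_symm {R : Type*} [CommRing R] {m : ℕ} (M : Matrix (Fin m) (Fin m) R)
    (h : M.IsSymm) (x z : Fin m → R) : z ⬝ᵥ (M *ᵥ x) = x ⬝ᵥ (M *ᵥ z) := by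
  rw [Matrix.dotProduct_mulVec, ← Matrix.mulVec_transpose, h.eq, dotProduct_comm]

lemma full_of_bad (p : ℕ) [Fact p.Prime] {m : ℕ} (G : Matrix (Fin m) (Fin m) ℤ)
    (hsym : G.IsSymm) (hdiag : ∀ i, (2:ℤ) ∣ G i i) (x z₀ : Fin m → ℤ_[p])
    (hQx : (2 * (p:ℤ_[p])) ∣ Qf (padic p G) x)
    (hβ : ¬ (p : ℤ_[p]) ∣ x ⬝ᵥ (padic p G *ᵥ z₀)) : QValuesFull p G := by
  have hsymp : (padic p G).IsSymm := hsym.map _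
  set Gp := padic p G with hGp
  set β := x ⬝ᵥ (Gp *ᵥ z₀) with hβdef
  have hu : IsUnit β := unit_of_not_dvd β hβ
  obtain ⟨q, hq⟩ := hQx
  ext a
  simp only [Set.mem_range, Set.mem_setOf_eq]
  constructor
  · rintro ⟨v, rfl⟩; exact Qf_even p G hsym hdiag v
  · rintro ⟨t, rfl⟩
    have hc : (2:ℤ_[p]) ∣ Qf Gp z₀ - 2*t := dvd_sub (Qf_even p G hsym hdiag z₀) ⟨t, rfl⟩
    obtain ⟨c', hc'⟩ := hc
    have hex : ∃ s : ℤ_[p], (2 * (p:ℤ_[p])) ∣ ((p:ℤ_[p])*q*s^2 + β*s + c') := by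
      set u := hu.unit with hu_def
      set s₀ : ℤ_[p] := -(c' * ↑u⁻¹) with hs₀
      have hβu : β * ↑u⁻¹ = 1 := by
        rw [show β = ↑u from (IsUnit.unit_spec hu).symm]
        exact_mod_cast u.mul_inv
      have h1 : β * s₀ + c' = 0 := by
        have : β * s₀ + c' = -(c' * (β * ↑u⁻¹)) + c' := by rw [hs₀]; ring
        rw [this, hβu]; ring
      have hg₀ : (p:ℤ_[p])*q*s₀^2 + β*s₀ + c' = (p:ℤ_[p])*q*s₀^2 := by
        rw [show (p:ℤ_[p])*q*s₀^2 + β*s₀ + c'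
            = (p:ℤ_[p])*q*s₀^2 + (β*s₀ + c') from by ring, h1, add_zero]
      by_cases hp : p = 2
      · subst hp
        have hp2 : ((2:ℕ) : ℤ_[2]) = (2 : ℤ_[2]) := by norm_num
        by_cases h2 : (2:ℤ_[2]) ∣ q * s₀^2
        · refine ⟨s₀, ?_⟩
          obtain ⟨d, hd⟩ := h2
          rw [hg₀, hp2]
          exact ⟨d, by rw [show (2:ℤ_[2])*q*s₀^2 = 2*(q*s₀^2) from by ring, hd]; ring⟩
        · refine ⟨s₀ + 2, ?_⟩
          have hexp : ((2:ℕ):ℤ_[2])*q*(s₀+2)^2 + β*(s₀+2) + c'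
              = (q*s₀^2 + β) * 2 + (2*2) * (2*q*s₀ + 2*q)
                + (((2:ℕ):ℤ_[2])*q*s₀^2 + β*s₀ + c') - ((2:ℕ):ℤ_[2])*q*s₀^2 := by
            rw [hp2]; ring
          rw [hexp, hg₀]
          have hsum : (2:ℤ_[2]) ∣ (q*s₀^2 + β) := by
            rw [dvd2_iff, map_add]
            have k1 : PadicInt.toZMod (q*s₀^2) = 1 :=
              zmod2_ne_zero _ (fun h => h2 ((dvd2_iff _).2 h))
            have k2 : PadicInt.toZMod β = 1 := by
              refine zmod2_ne_zero _ (fun h => hβ ?_)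
              have : (2:ℤ_[2]) ∣ β := (dvd2_iff _).2 h
              simpa using this
            rw [k1, k2]; rfl
          obtain ⟨d, hd⟩ := hsum
          rw [hp2, hd]
          exact ⟨d + (2*q*s₀ + 2*q), by ring⟩
      · refine ⟨s₀, ?_⟩
        rw [hg₀]
        have h2u := two_unit (p := p) hp
        set u2 := h2u.unit with hu2_def
        have h2i : (2:ℤ_[p]) * ↑u2⁻¹ = 1 := by
          rw [show (2:ℤ_[p]) = ↑u2 from (IsUnit.unit_spec h2u).symm]
          exact_mod_cast u2.mul_inv
        exact ⟨↑u2⁻¹ * (q * s₀^2), by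
          rw [show 2 * (p:ℤ_[p]) * (↑u2⁻¹ * (q * s₀^2))
              = (2 * ↑u2⁻¹) * ((p:ℤ_[p]) * q * s₀^2) from by ring, h2i, one_mul]⟩
    obtain ⟨s, k, hk⟩ := hex
    set F : Polynomial ℤ_[p] :=
      Polynomial.C (Qf Gp x) * Polynomial.X^2 + Polynomial.C (2*β) * Polynomial.X
        + Polynomial.C (Qf Gp z₀ - 2*t) with hF
    have hFeval : ∀ w, F.eval w = Qf Gp x * w^2 + 2*β*w + (Qf Gp z₀ - 2*t) := by
      intro w; simp [hF]; try ring
    have hFder : ∀ w, (Polynomial.derivative F).eval w = 2*(Qf Gp x * w + β) := by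
      intro w; simp [hF]; try ring
    have hdunit : ¬ (p:ℤ_[p]) ∣ (Qf Gp x * s + β) := by
      intro hd
      apply hβ
      have h1 : (p:ℤ_[p]) ∣ Qf Gp x * s := ⟨2*q*s, by rw [hq]; ring⟩
      have := dvd_sub hd h1
      simpa using this
    have hnd : ‖(Polynomial.derivative F).eval s‖ = ‖(2:ℤ_[p])‖ := by
      rw [hFder, norm_mul, norm_one_of_not_dvd _ hdunit, mul_one]
    have hFs : F.eval s = 2*(2*(p:ℤ_[p])*k) := by
      rw [hFeval, hq, hc', ← hk]; ring
    have h2ne : (2:ℤ_[p]) ≠ 0 := two_ne_zero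
    have h2pos : (0:ℝ) < ‖(2:ℤ_[p])‖ := norm_pos_iff.2 h2ne
    have hlt : ‖F.eval s‖ < ‖(Polynomial.derivative F).eval s‖^2 := by
      rw [hFs, hnd]
      have e : ‖(2:ℤ_[p])*(2*(p:ℤ_[p])*k)‖
          = ‖(2:ℤ_[p])‖ * (‖(2:ℤ_[p])‖ * (‖((p:ℕ):ℤ_[p])‖ * ‖k‖)) := by
        rw [norm_mul, norm_mul, norm_mul]; ring
      rw [e, sq]
      have hplt : ‖((p:ℕ):ℤ_[p])‖ * ‖k‖ < 1 := by
        have hpn : ‖((p:ℕ):ℤ_[p])‖ = ((p:ℝ))⁻¹ := PadicInt.norm_p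
        have hp1 : (1:ℝ) < (p:ℝ) := by
          exact_mod_cast (Fact.out : p.Prime).one_lt
        calc ‖((p:ℕ):ℤ_[p])‖ * ‖k‖ ≤ ‖((p:ℕ):ℤ_[p])‖ * 1 :=
              mul_le_mul_of_nonneg_left k.norm_le_one (norm_nonneg _)
          _ = ((p:ℝ))⁻¹ := by rw [mul_one, hpn]
          _ < 1 := inv_lt_one_of_one_lt₀ hp1
      have := mul_lt_mul_of_pos_left hplt h2pos
      rw [mul_one] at this
      exact mul_lt_mul_of_pos_left this h2pos
    obtain ⟨z, hz0, -⟩ := hensels_lemma hlt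
    refine ⟨z • x + z₀, ?_⟩
    have hcross : z₀ ⬝ᵥ (Gp *ᵥ (z • x)) = z * β := by
      rw [dot_symm Gp hsymp, smul_dotProduct, smul_eq_mul]
    have hcross2 : (z • x) ⬝ᵥ (Gp *ᵥ z₀) = z * β := by
      rw [smul_dotProduct, smul_eq_mul]
    have hq2 : Qf Gp (z • x + z₀) = Qf Gp x * z^2 + 2*β*z + Qf Gp z₀ := by
      rw [Qf_add, Qf_smul, hcross, hcross2]; ring
    rw [Polynomial.coe_aeval_eq_eval] at hz0
    have hz0' := hFeval z ▸ hz0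
    have : Qf Gp x * z^2 + 2*β*z + (Qf Gp z₀ - 2*t) = 0 := hz0'
    rw [hq2]
    linear_combination this

end Aux

/-- `Λ_{2p}(W ∩ L_p) = W ∩ Λ_{2p}(L_p)` for any `ℚ_p`-subspace `W` of
`ℚ_p L`. -/
theorem lambda_subspace_intersection (p : ℕ) [Fact p.Prime] {m : ℕ}
    (G : Matrix (Fin m) (Fin m) ℤ) (hG : IsLat G) (hnorm : Normalized G)
    (hcond : ¬ QValuesFull p G ∨ (p = 2 ∧ ScaleIdeal G = Ideal.span {(2 : ℤ)}))
    (W : Subspace ℚ_[p] (Fin m → ℚ_[p])) :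
    LambdaIn (2 * p) (padic p G) {x : Fin m → ℤ_[p] | (fun i => (x i : ℚ_[p])) ∈ W}
      = {x : Fin m → ℤ_[p] | (fun i => (x i : ℚ_[p])) ∈ W}
          ∩ Lambda (2 * p) (padic p G) := by
  have hsym := hG.1
  have hdiag : ∀ i, (2:ℤ) ∣ G i i := by
    intro i
    have hmem : Qf G (Pi.single i 1) ∈ NormIdeal G :=
      Ideal.subset_span ⟨Pi.single i 1, rfl⟩
    rw [hnorm, Ideal.mem_span_singleton] at hmem
    have he : Qf G (Pi.single i 1) = G i i := by simp [Qf, Matrix.mulVec_single]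
    rwa [he] at hmem
  have hcast : ((2*p : ℕ) : ℤ_[p]) = 2 * ((p:ℕ) : ℤ_[p]) := by push_cast; ring
  ext x
  simp only [LambdaIn, Lambda, Set.mem_setOf_eq, Set.mem_inter_iff, Set.mem_sep_iff]
  constructor
  · rintro ⟨hxW, hdvd⟩
    refine ⟨hxW, fun z => ?_⟩
    have h0mem : (fun i => (((0 : Fin m → ℤ_[p]) i : ℚ_[p]))) ∈ W := by
      have : (fun i => (((0 : Fin m → ℤ_[p]) i : ℚ_[p]))) = (0 : Fin m → ℚ_[p]) := by
        funext i; simp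
      rw [this]; exact W.zero_mem
    have hQx : ((2*p : ℕ) : ℤ_[p]) ∣ Qf (padic p G) x := by
      have h0 := hdvd 0 h0mem
      simpa [Qf] using h0
    have hB : ((p:ℕ):ℤ_[p]) ∣ x ⬝ᵥ (padic p G *ᵥ z) := by
      by_contra hβ
      rcases hcond with hnf | ⟨hp2, hscale⟩
      · exact hnf (full_of_bad p G hsym hdiag x z (hcast ▸ hQx) hβ)
      · apply hβ
        have hent : ∀ i j, (2:ℤ) ∣ G i j := by
          intro i j
          have hmem : G i j ∈ ScaleIdeal G := Ideal.subset_span ⟨i, j, rfl⟩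
          rwa [hscale, Ideal.mem_span_singleton] at hmem
        have h2d : (2:ℤ_[p]) ∣ x ⬝ᵥ (padic p G *ᵥ z) := by
          simp only [dotProduct, Matrix.mulVec]
          apply Finset.dvd_sum
          intro i _
          apply Dvd.dvd.mul_left
          apply Finset.dvd_sum
          intro j _
          apply Dvd.dvd.mul_right
          show (2:ℤ_[p]) ∣ ((G i j : ℤ) : ℤ_[p])
          obtain ⟨d, hd⟩ := hent i j
          exact ⟨(d : ℤ_[p]), by rw [hd]; push_cast; ring⟩
        subst hp2
        rw [show ((2:ℕ):ℤ_[2]) = (2:ℤ_[2]) from by norm_num]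
        exact h2d
    obtain ⟨b, hb⟩ := hB
    rw [Qf_add, dot_symm (padic p G) (hsym.map _) x z]
    rw [show Qf (padic p G) x + Qf (padic p G) z
          + (x ⬝ᵥ (padic p G *ᵥ z) + x ⬝ᵥ (padic p G *ᵥ z)) - Qf (padic p G) z
        = Qf (padic p G) x + 2 * (x ⬝ᵥ (padic p G *ᵥ z)) from by ring]
    refine dvd_add hQx ⟨b, ?_⟩
    rw [hb, hcast]; ring
  · rintro ⟨hxW, hlam⟩
    exact ⟨hxW, fun z _ => hlam z⟩

end Paper
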